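/- For q ≥ 1, let Γ_q be the group with presentation ⟨x, y, z ∣ [x,y] = z^q, xz = zx, yz = zy⟩. Then the second group cohomology H²(Γ_q; ℤ), with trivial coefficients ℤ, is isomorphic as an abelian group to ℤ ⊕ ℤ ⊕ ℤ/qℤ. -/

import Mathlib

/-- The relators of the presentation `⟨x, y, z ∣ [x,y] = z^q, xz = zx, yz = zy⟩`,
as elements of the free group on three generators `x = 0`, `y = 1`, `z = 2`. -/
def nilRels (q : ℕ) : Set (FreeGroup (Fin 3)) :=
  { FreeGroup.of 0 * FreeGroup.of 1 * (FreeGroup.of 0)⁻¹ * (FreeGroup.of 1)⁻¹ *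
      (FreeGroup.of 2 ^ q)⁻¹,
    FreeGroup.of 0 * FreeGroup.of 2 * (FreeGroup.of 0)⁻¹ * (FreeGroup.of 2)⁻¹,
    FreeGroup.of 1 * FreeGroup.of 2 * (FreeGroup.of 1)⁻¹ * (FreeGroup.of 2)⁻¹ }


section AbstractHeis

variable {M : Type*} [Group M]

lemma semiconj_zpow {U Y C : M} (h1 : U * Y = Y * (U * C)) (hYC : Commute Y C)
    (hUC : Commute U C) : ∀ b : ℤ, U * Y ^ b = Y ^ b * (U * C ^ b) := by
  have h2 : Y⁻¹ * U = U * (Y⁻¹ * C) := by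
    calc Y⁻¹ * U = Y⁻¹ * (U * Y) * Y⁻¹ := by group
      _ = Y⁻¹ * (Y * (U * C)) * Y⁻¹ := by rw [h1]
      _ = U * (C * Y⁻¹) := by group
      _ = U * (Y⁻¹ * C) := by rw [hYC.inv_left.symm.eq]
  have hinv : U * Y⁻¹ = Y⁻¹ * (U * C⁻¹) := by
    calc U * Y⁻¹ = U * (Y⁻¹ * C) * C⁻¹ := by group
      _ = (Y⁻¹ * U) * C⁻¹ := by rw [← h2]
      _ = Y⁻¹ * (U * C⁻¹) := by group
  intro b
  induction b using Int.induction_on with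
  | zero => simp
  | succ n ih =>
    calc U * Y ^ ((n : ℤ) + 1) = (U * Y ^ (n : ℤ)) * Y := by rw [zpow_add_one]; group
      _ = (Y ^ (n : ℤ) * (U * C ^ (n : ℤ))) * Y := by rw [ih]
      _ = Y ^ (n : ℤ) * (U * (C ^ (n : ℤ) * Y)) := by group
      _ = Y ^ (n : ℤ) * (U * (Y * C ^ (n : ℤ))) := by rw [(hYC.symm.zpow_left (n : ℤ)).eq]
      _ = Y ^ (n : ℤ) * ((U * Y) * C ^ (n : ℤ)) := by group
      _ = Y ^ (n : ℤ) * ((Y * (U * C)) * C ^ (n : ℤ)) := by rw [h1]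
      _ = Y ^ ((n : ℤ) + 1) * (U * C ^ ((n : ℤ) + 1)) := by group
  | pred n ih =>
    calc U * Y ^ (-(n : ℤ) - 1) = (U * Y ^ (-(n : ℤ))) * Y⁻¹ := by rw [zpow_sub_one]; group
      _ = (Y ^ (-(n : ℤ)) * (U * C ^ (-(n : ℤ)))) * Y⁻¹ := by rw [ih]
      _ = Y ^ (-(n : ℤ)) * (U * (C ^ (-(n : ℤ)) * Y⁻¹)) := by group
      _ = Y ^ (-(n : ℤ)) * (U * (Y⁻¹ * C ^ (-(n : ℤ)))) := by
          rw [((hYC.symm.zpow_left (-(n : ℤ))).inv_right).eq]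
      _ = Y ^ (-(n : ℤ)) * ((U * Y⁻¹) * C ^ (-(n : ℤ))) := by group
      _ = Y ^ (-(n : ℤ)) * ((Y⁻¹ * (U * C⁻¹)) * C ^ (-(n : ℤ))) := by rw [hinv]
      _ = Y ^ (-(n : ℤ) - 1) * (U * C ^ (-(n : ℤ) - 1)) := by group

variable (q : ℕ) {X Y Z : M}

lemma heis_comm (hXZ : Commute X Z) (hYZ : Commute Y Z)
    (hXY : X * Y = Y * X * Z ^ (q : ℤ)) (a b : ℤ) :
    X ^ a * Y ^ b = Y ^ b * X ^ a * Z ^ ((q : ℤ) * a * b) := by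
  have h1 : X * Y = Y * (X * Z ^ (q : ℤ)) := by rw [hXY]; group
  have hb : ∀ b : ℤ, X * Y ^ b = Y ^ b * (X * Z ^ ((q : ℤ) * b)) := by
    intro b
    have := semiconj_zpow h1 (hYZ.zpow_right _) (hXZ.zpow_right _) b
    rw [← zpow_mul] at this
    exact this
  have h1' : Y ^ b * X = X * (Y ^ b * (Z ^ ((q : ℤ) * b))⁻¹) := by
    calc Y ^ b * X = (Y ^ b * (X * Z ^ ((q : ℤ) * b))) * (Z ^ ((q : ℤ) * b))⁻¹ := by group
      _ = (X * Y ^ b) * (Z ^ ((q : ℤ) * b))⁻¹ := by rw [← hb b]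
      _ = X * (Y ^ b * (Z ^ ((q : ℤ) * b))⁻¹) := by group
  have ha := semiconj_zpow h1' ((hXZ.zpow_right _).inv_right)
    (((hYZ.zpow_right _).zpow_left _).inv_right) a
  have hz : ((Z ^ ((q : ℤ) * b))⁻¹ ^ a)⁻¹ = Z ^ ((q : ℤ) * a * b) := by
    rw [inv_zpow, inv_inv, ← zpow_mul, show (q : ℤ) * b * a = (q : ℤ) * a * b from by ring]
  calc X ^ a * Y ^ b = (X ^ a * (Y ^ b * (Z ^ ((q : ℤ) * b))⁻¹ ^ a)) *
        ((Z ^ ((q : ℤ) * b))⁻¹ ^ a)⁻¹ := by group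
    _ = (Y ^ b * X ^ a) * ((Z ^ ((q : ℤ) * b))⁻¹ ^ a)⁻¹ := by rw [← ha]
    _ = Y ^ b * X ^ a * Z ^ ((q : ℤ) * a * b) := by rw [hz]

lemma heis_nf (hXZ : Commute X Z) (hYZ : Commute Y Z)
    (hXY : X * Y = Y * X * Z ^ (q : ℤ)) (a b c a' b' c' : ℤ) :
    (Y ^ b * X ^ a * Z ^ c) * (Y ^ b' * X ^ a' * Z ^ c') =
      Y ^ (b + b') * X ^ (a + a') * Z ^ (c + c' + (q : ℤ) * a * b') := by
  have hZY : (Z ^ c) * (Y ^ b') = (Y ^ b') * (Z ^ c) := (hYZ.symm.zpow_zpow c b').eq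
  have hZX : (Z ^ (c + (q : ℤ) * a * b')) * (X ^ a') = (X ^ a') * (Z ^ (c + (q : ℤ) * a * b')) :=
    (hXZ.symm.zpow_zpow _ a').eq
  have hcomm := heis_comm q hXZ hYZ hXY a b'
  calc (Y ^ b * X ^ a * Z ^ c) * (Y ^ b' * X ^ a' * Z ^ c')
      = Y ^ b * X ^ a * (Z ^ c * Y ^ b') * (X ^ a' * Z ^ c') := by group
    _ = Y ^ b * X ^ a * (Y ^ b' * Z ^ c) * (X ^ a' * Z ^ c') := by rw [hZY]
    _ = Y ^ b * (X ^ a * Y ^ b') * (Z ^ c * X ^ a') * Z ^ c' := by group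
    _ = Y ^ b * (Y ^ b' * X ^ a * Z ^ ((q : ℤ) * a * b')) * (Z ^ c * X ^ a') * Z ^ c' := by
        rw [hcomm]
    _ = (Y ^ b * Y ^ b') * X ^ a * ((Z ^ ((q : ℤ) * a * b') * Z ^ c) * X ^ a') * Z ^ c' := by
        group
    _ = (Y ^ b * Y ^ b') * X ^ a * ((Z ^ (c + (q : ℤ) * a * b')) * X ^ a') * Z ^ c' := by
        rw [add_comm c ((q : ℤ) * a * b'), zpow_add]
    _ = (Y ^ b * Y ^ b') * X ^ a * (X ^ a' * Z ^ (c + (q : ℤ) * a * b')) * Z ^ c' := by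
        rw [hZX]
    _ = Y ^ (b + b') * X ^ (a + a') * Z ^ (c + c' + (q : ℤ) * a * b') := by group

end AbstractHeis


@[ext]
structure Heis (q : ℕ) where
  a : ℤ
  b : ℤ
  c : ℤ

namespace Heis

variable {q : ℕ}

instance : Mul (Heis q) := ⟨fun g h => ⟨g.a + h.a, g.b + h.b, g.c + h.c + q * g.a * h.b⟩⟩
instance : One (Heis q) := ⟨⟨0, 0, 0⟩⟩
instance : Inv (Heis q) := ⟨fun g => ⟨-g.a, -g.b, -g.c + q * g.a * g.b⟩⟩

@[simp] lemma mul_a (g h : Heis q) : (g * h).a = g.a + h.a := rfl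
@[simp] lemma mul_b (g h : Heis q) : (g * h).b = g.b + h.b := rfl
@[simp] lemma mul_c (g h : Heis q) : (g * h).c = g.c + h.c + q * g.a * h.b := rfl
@[simp] lemma one_a : (1 : Heis q).a = 0 := rfl
@[simp] lemma one_b : (1 : Heis q).b = 0 := rfl
@[simp] lemma one_c : (1 : Heis q).c = 0 := rfl
@[simp] lemma inv_a (g : Heis q) : (g⁻¹).a = -g.a := rfl
@[simp] lemma inv_b (g : Heis q) : (g⁻¹).b = -g.b := rfl
@[simp] lemma inv_c (g : Heis q) : (g⁻¹).c = -g.c + q * g.a * g.b := rfl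

instance : Group (Heis q) where
  mul_assoc g h k := by ext <;> simp <;> ring
  one_mul g := by ext <;> simp
  mul_one g := by ext <;> simp
  inv_mul_cancel g := by ext <;> simp <;> ring

def X : Heis q := ⟨1, 0, 0⟩
def Y : Heis q := ⟨0, 1, 0⟩
def Z : Heis q := ⟨0, 0, 1⟩

@[simp] lemma z_pow (k : ℕ) : (Z : Heis q) ^ k = ⟨0, 0, k⟩ := by
  induction k with
  | zero => rfl
  | succ n ih => rw [pow_succ, ih]; ext <;> simp [Z]

@[simp] lemma z_zpow (k : ℤ) : (Z : Heis q) ^ k = ⟨0, 0, k⟩ := by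
  induction k using Int.induction_on with
  | zero => rfl
  | succ n ih => rw [zpow_add_one, ih]; ext <;> simp [Z] <;> omega
  | pred n ih => rw [zpow_sub_one, ih]; ext <;> simp [Z] <;> omega

@[simp] lemma x_zpow (k : ℤ) : (X : Heis q) ^ k = ⟨k, 0, 0⟩ := by
  induction k using Int.induction_on with
  | zero => rfl
  | succ n ih => rw [zpow_add_one, ih]; ext <;> simp [X] <;> omega
  | pred n ih => rw [zpow_sub_one, ih]; ext <;> simp [X] <;> omega

@[simp] lemma y_zpow (k : ℤ) : (Y : Heis q) ^ k = ⟨0, k, 0⟩ := by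
  induction k using Int.induction_on with
  | zero => rfl
  | succ n ih => rw [zpow_add_one, ih]; ext <;> simp [Y] <;> omega
  | pred n ih => rw [zpow_sub_one, ih]; ext <;> simp [Y] <;> omega

lemma hXZ : Commute (X : Heis q) Z := by show _ = _; ext <;> simp [X, Z]
lemma hYZ : Commute (Y : Heis q) Z := by show _ = _; ext <;> simp [Y, Z]
lemma hXY : (X : Heis q) * Y = Y * X * Z ^ (q : ℤ) := by rw [z_zpow]; ext <;> simp [X, Y]

lemma mk_mul (a b c a' b' c' : ℤ) :
    (⟨a, b, c⟩ : Heis q) * ⟨a', b', c'⟩ = ⟨a + a', b + b', c + c' + q * a * b'⟩ := rfl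
lemma one_def : (1 : Heis q) = ⟨0, 0, 0⟩ := rfl
lemma mk_inv (a b c : ℤ) : (⟨a, b, c⟩ : Heis q)⁻¹ = ⟨-a, -b, -c + q * a * b⟩ := rfl

end Heis

namespace HeisIso

variable (q : ℕ)

abbrev P (q : ℕ) := PresentedGroup (nilRels q)

def Xp : P q := PresentedGroup.of 0
def Yp : P q := PresentedGroup.of 1
def Zp : P q := PresentedGroup.of 2

lemma mk_rel_one {r : FreeGroup (Fin 3)} (hr : r ∈ nilRels q) :
    PresentedGroup.mk (nilRels q) r = 1 :=
  (QuotientGroup.eq_one_iff r).2 (Subgroup.subset_normalClosure hr)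

lemma rel2 : Xp q * Zp q = Zp q * Xp q := by
  have h : Xp q * Zp q * (Xp q)⁻¹ * (Zp q)⁻¹ = 1 := by
    have h := mk_rel_one q (r := FreeGroup.of 0 * FreeGroup.of 2 * (FreeGroup.of 0)⁻¹ *
      (FreeGroup.of 2)⁻¹) (by simp [nilRels])
    simp only [map_mul, map_inv] at h
    exact h
  calc Xp q * Zp q = (Xp q * Zp q * (Xp q)⁻¹ * (Zp q)⁻¹) * (Zp q * Xp q) := by group
    _ = Zp q * Xp q := by rw [h]; group

lemma rel3 : Yp q * Zp q = Zp q * Yp q := by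
  have h : Yp q * Zp q * (Yp q)⁻¹ * (Zp q)⁻¹ = 1 := by
    have h := mk_rel_one q (r := FreeGroup.of 1 * FreeGroup.of 2 * (FreeGroup.of 1)⁻¹ *
      (FreeGroup.of 2)⁻¹) (by simp [nilRels])
    simp only [map_mul, map_inv] at h
    exact h
  calc Yp q * Zp q = (Yp q * Zp q * (Yp q)⁻¹ * (Zp q)⁻¹) * (Zp q * Yp q) := by group
    _ = Zp q * Yp q := by rw [h]; group

lemma commXZ : Commute (Xp q) (Zp q) := rel2 q
lemma commYZ : Commute (Yp q) (Zp q) := rel3 q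

lemma rel1 : Xp q * Yp q = Yp q * Xp q * Zp q ^ (q : ℤ) := by
  have h : Xp q * Yp q * (Xp q)⁻¹ * (Yp q)⁻¹ * (Zp q ^ q)⁻¹ = 1 := by
    have h := mk_rel_one q (r := FreeGroup.of 0 * FreeGroup.of 1 * (FreeGroup.of 0)⁻¹ *
      (FreeGroup.of 1)⁻¹ * (FreeGroup.of 2 ^ q)⁻¹) (by simp [nilRels])
    simp only [map_mul, map_inv, map_pow] at h
    exact h
  have hc : Zp q ^ q * (Yp q * Xp q) = Yp q * Xp q * Zp q ^ q :=
    ((((commYZ q).mul_left (commXZ q)).pow_right q).symm).eq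
  calc Xp q * Yp q
      = (Xp q * Yp q * (Xp q)⁻¹ * (Yp q)⁻¹ * (Zp q ^ q)⁻¹) * (Zp q ^ q * (Yp q * Xp q)) := by
        group
    _ = Zp q ^ q * (Yp q * Xp q) := by rw [h]; group
    _ = Yp q * Xp q * Zp q ^ q := hc
    _ = Yp q * Xp q * Zp q ^ (q : ℤ) := by rw [zpow_natCast]

/-- the map to `Heis q` on generators -/
def fH : Fin 3 → Heis q := ![Heis.X, Heis.Y, Heis.Z]

lemma fH_rels : ∀ r ∈ nilRels q, FreeGroup.lift (fH q) r = 1 := by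
  intro r hr
  simp only [nilRels, Set.mem_insert_iff, Set.mem_singleton_iff] at hr
  rcases hr with h | h | h <;> subst h <;>
    simp only [map_mul, map_inv, map_pow, FreeGroup.lift_apply_of, fH] <;>
    simp only [Matrix.cons_val_zero, Matrix.cons_val_one, Matrix.head_cons,
      Matrix.cons_val_two, Matrix.tail_cons]
  · rw [Heis.z_pow]; ext <;> simp [Heis.X, Heis.Y] <;> ring
  · ext <;> simp [Heis.X, Heis.Z] <;> ring
  · ext <;> simp [Heis.Y, Heis.Z] <;> ring

/-- the homomorphism `P q →* Heis q` -/
def toHeis : P q →* Heis q := PresentedGroup.toGroup (fH_rels q)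

/-- the homomorphism `Heis q →* P q` -/
def toPres : Heis q →* P q :=
  MonoidHom.mk' (fun g => Yp q ^ g.b * Xp q ^ g.a * Zp q ^ g.c) (by
    intro g h
    rw [heis_nf q (commXZ q) (commYZ q) (rel1 q)]
    rfl)

@[simp] lemma toHeis_X : toHeis q (Xp q) = Heis.X := by
  rw [toHeis, Xp, PresentedGroup.toGroup.of]; rfl

@[simp] lemma toHeis_Y : toHeis q (Yp q) = Heis.Y := by
  rw [toHeis, Yp, PresentedGroup.toGroup.of]; rfl

@[simp] lemma toHeis_Z : toHeis q (Zp q) = Heis.Z := by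
  rw [toHeis, Zp, PresentedGroup.toGroup.of]; rfl

/-- The group `Γ_q` is isomorphic to the Heisenberg-type group. -/
def presIso : P q ≃* Heis q where
  toFun := toHeis q
  invFun := toPres q
  left_inv := by
    intro p
    have : (toPres q).comp (toHeis q) = MonoidHom.id (P q) := by
      apply PresentedGroup.ext
      intro i
      fin_cases i <;>
        simp only [MonoidHom.comp_apply, MonoidHom.id_apply]
      · show toPres q (toHeis q (Xp q)) = Xp q
        rw [toHeis_X]
        show Yp q ^ (0:ℤ) * Xp q ^ (1:ℤ) * Zp q ^ (0:ℤ) = Xp q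
        simp
      · show toPres q (toHeis q (Yp q)) = Yp q
        rw [toHeis_Y]
        show Yp q ^ (1:ℤ) * Xp q ^ (0:ℤ) * Zp q ^ (0:ℤ) = Yp q
        simp
      · show toPres q (toHeis q (Zp q)) = Zp q
        rw [toHeis_Z]
        show Yp q ^ (0:ℤ) * Xp q ^ (0:ℤ) * Zp q ^ (1:ℤ) = Zp q
        simp
    exact DFunLike.congr_fun this p
  right_inv := by
    intro g
    show toHeis q (Yp q ^ g.b * Xp q ^ g.a * Zp q ^ g.c) = g
    rw [map_mul, map_mul, map_zpow, map_zpow, map_zpow, toHeis_X, toHeis_Y, toHeis_Z]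
    rw [Heis.x_zpow, Heis.y_zpow, Heis.z_zpow]
    ext <;> simp
  map_mul' := map_mul _

end HeisIso
namespace HeisCoh

/-- integer binomial coefficient `t*(t-1)/2` -/
def Bb (t : ℤ) : ℤ := t * (t - 1) / 2

lemma two_mul_Bb (t : ℤ) : 2 * Bb t = t * (t - 1) := by
  have h : (2 : ℤ) ∣ t * (t - 1) := by
    have h2 := Int.even_mul_succ_self (t - 1)
    rw [sub_add_cancel, mul_comm] at h2
    exact h2.two_dvd
  rw [Bb, Int.mul_ediv_cancel' h]

lemma Bb_add (s t : ℤ) : Bb (s + t) = Bb s + Bb t + s * t := by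
  apply Int.eq_of_mul_eq_mul_left (a := 2) (by norm_num)
  rw [mul_add, mul_add, two_mul_Bb, two_mul_Bb, two_mul_Bb]
  ring

@[simp] lemma Bb_zero : Bb 0 = 0 := rfl
@[simp] lemma Bb_one : Bb 1 = 0 := rfl
@[simp] lemma Bb_negone : Bb (-1) = 1 := rfl

variable (q : ℕ)

/-- raw 2-cochains -/
abbrev C2 (q : ℕ) := Heis q × Heis q → ℤ
/-- raw 1-cochains -/
abbrev C1 (q : ℕ) := Heis q → ℤ

/-- raw cocycle condition (trivial coefficients) -/
def IsCo (f : C2 q) : Prop :=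
  ∀ g h j : Heis q, f (g * h, j) + f (g, h) = f (h, j) + f (g, h * j)

/-- raw coboundary -/
def d1 (φ : C1 q) : C2 q := fun p => φ p.2 - φ (p.1 * p.2) + φ p.1

lemma isCo_d1 (φ : C1 q) : IsCo q (d1 q φ) := by
  intro g h j
  simp only [d1, mul_assoc]
  ring

variable {q}

lemma IsCo.one_fst {f : C2 q} (hco : IsCo q f) (h1 : f (1, 1) = 0) (j : Heis q) :
    f (1, j) = 0 := by
  have := hco 1 1 j
  simp only [one_mul, h1] at this
  linarith

lemma IsCo.one_snd {f : C2 q} (hco : IsCo q f) (h1 : f (1, 1) = 0) (g : Heis q) :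
    f (g, 1) = 0 := by
  have := hco g 1 1
  simp only [mul_one, one_mul, h1] at this
  linarith

lemma IsCo.inv_symm {f : C2 q} (hco : IsCo q f) (h1 : f (1, 1) = 0) (g : Heis q) :
    f (g⁻¹, g) = f (g, g⁻¹) := by
  have := hco g g⁻¹ g
  rw [mul_inv_cancel, inv_mul_cancel, hco.one_fst h1, hco.one_snd h1] at this
  linarith

variable (q)

/-- the functional giving the `[X,Z]`-exponent -/
def mm (f : C2 q) : ℤ :=
  f (⟨1,0,0⟩, ⟨0,0,1⟩) + f (⟨1,0,1⟩, ⟨-1,0,0⟩) - f (⟨1,0,0⟩, ⟨-1,0,0⟩) - f (1, 1)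

/-- the functional giving the `[Y,Z]`-exponent -/
def nn (f : C2 q) : ℤ :=
  f (⟨0,1,0⟩, ⟨0,0,1⟩) + f (⟨0,1,1⟩, ⟨0,-1,0⟩) - f (⟨0,1,0⟩, ⟨0,-1,0⟩) - f (1, 1)

/-- the functional giving the `[X,Y]Z^{-q}`-exponent -/
def uu (f : C2 q) : ℤ :=
  f (⟨1,0,0⟩, ⟨0,1,0⟩) + f (⟨1,1,q⟩, ⟨-1,0,0⟩) + f (⟨0,1,q⟩, ⟨0,-1,0⟩)
    - f (⟨1,0,0⟩, ⟨-1,0,0⟩) - f (⟨0,1,0⟩, ⟨0,-1,0⟩) - f (1, 1)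
    - ∑ i ∈ Finset.range q, f (⟨0,0,(i : ℤ)⟩, ⟨0,0,1⟩)

lemma mm_add (f g : C2 q) : mm q (f + g) = mm q f + mm q g := by
  simp only [mm, Pi.add_apply]; ring

lemma nn_add (f g : C2 q) : nn q (f + g) = nn q f + nn q g := by
  simp only [nn, Pi.add_apply]; ring

lemma uu_add (f g : C2 q) : uu q (f + g) = uu q f + uu q g := by
  simp only [uu, Pi.add_apply, Finset.sum_add_distrib]; ring

lemma mm_smul (r : ℤ) (f : C2 q) : mm q (r • f) = r * mm q f := by
  simp only [mm, Pi.smul_apply, smul_eq_mul]; ring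

lemma nn_smul (r : ℤ) (f : C2 q) : nn q (r • f) = r * nn q f := by
  simp only [nn, Pi.smul_apply, smul_eq_mul]; ring

lemma uu_smul (r : ℤ) (f : C2 q) : uu q (r • f) = r * uu q f := by
  simp only [uu, Pi.smul_apply, smul_eq_mul, ← Finset.mul_sum]; ring

lemma mm_d1 (φ : C1 q) : mm q (d1 q φ) = 0 := by
  simp only [mm, d1, Heis.mk_mul, Heis.one_def]
  norm_num
  ring

lemma nn_d1 (φ : C1 q) : nn q (d1 q φ) = 0 := by
  simp only [nn, d1, Heis.mk_mul, Heis.one_def]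
  norm_num
  ring

lemma uu_d1 (φ : C1 q) : uu q (d1 q φ) = -(q : ℤ) * φ ⟨0,0,1⟩ := by
  have hsum : ∑ i ∈ Finset.range q, (d1 q φ) (⟨0,0,(i : ℤ)⟩, ⟨0,0,1⟩)
      = (q : ℤ) * φ ⟨0,0,1⟩ + (φ ⟨0,0,((0:ℕ) : ℤ)⟩ - φ ⟨0,0,(q : ℤ)⟩) := by
    have h1 : ∀ i : ℕ, (d1 q φ) (⟨0,0,(i : ℤ)⟩, ⟨0,0,1⟩)
        = φ ⟨0,0,1⟩ + (φ ⟨0,0,((i : ℕ) : ℤ)⟩ - φ ⟨0,0,(((i+1 : ℕ)) : ℤ)⟩) := by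
      intro i
      simp only [d1, Heis.mk_mul]
      push_cast
      norm_num
      ring
    rw [Finset.sum_congr rfl (fun i _ => h1 i), Finset.sum_add_distrib, Finset.sum_const,
      Finset.card_range]
    rw [Finset.sum_range_sub' (f := fun i : ℕ => φ ⟨0,0,((i : ℕ) : ℤ)⟩) q]
    push_cast
    ring
  rw [uu, hsum]
  simp only [d1, Heis.mk_mul, Heis.one_def]
  norm_num
  ring

end HeisCoh

namespace HeisCoh

variable (q : ℕ)

/-- cocycle pairing with `[X,Z]` -/
def gam1 : C2 q := fun p => p.1.a * p.2.c + q * Bb p.1.a * p.2.b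
/-- cocycle pairing with `[Y,Z]` -/
def gam2 : C2 q := fun p => p.1.c * p.2.b + q * p.1.a * Bb p.2.b
/-- the cup product cocycle -/
def alpha : C2 q := fun p => p.1.a * p.2.b

lemma isCo_gam1 : IsCo q (gam1 q) := by
  intro g h j
  simp only [gam1, Heis.mul_a, Heis.mul_b, Heis.mul_c, Bb_add]
  ring

lemma isCo_gam2 : IsCo q (gam2 q) := by
  intro g h j
  simp only [gam2, Heis.mul_a, Heis.mul_b, Heis.mul_c, Bb_add]
  ring

lemma isCo_alpha : IsCo q (alpha q) := by
  intro g h j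
  simp only [alpha, Heis.mul_a, Heis.mul_b, Heis.mul_c]
  ring

@[simp] lemma mm_gam1 : mm q (gam1 q) = 1 := by simp [mm, gam1, Heis.one_def]
@[simp] lemma nn_gam1 : nn q (gam1 q) = 0 := by simp [nn, gam1, Heis.one_def]
@[simp] lemma uu_gam1 : uu q (gam1 q) = 0 := by simp [uu, gam1, Heis.one_def]
@[simp] lemma mm_gam2 : mm q (gam2 q) = 0 := by simp [mm, gam2, Heis.one_def]
@[simp] lemma nn_gam2 : nn q (gam2 q) = -1 := by simp [nn, gam2, Heis.one_def]
@[simp] lemma uu_gam2 : uu q (gam2 q) = -(q : ℤ) := by simp [uu, gam2, Heis.one_def]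
@[simp] lemma mm_alpha : mm q (alpha q) = 0 := by simp [mm, alpha, Heis.one_def]
@[simp] lemma nn_alpha : nn q (alpha q) = 0 := by simp [nn, alpha, Heis.one_def]
@[simp] lemma uu_alpha : uu q (alpha q) = 1 := by simp [uu, alpha, Heis.one_def]

end HeisCoh

section CommutatorHelpers

variable {M : Type*} [Group M]

lemma comm_of_commutator {a b : M} (h : a * b * a⁻¹ * b⁻¹ = 1) : a * b = b * a := by
  calc a * b = (a * b * a⁻¹ * b⁻¹) * (b * a) := by group
    _ = b * a := by rw [h]; group

lemma rel_of_commutator {X Y Z : M} (q : ℕ) (hXZ : Commute X Z) (hYZ : Commute Y Z)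
    (h : X * Y * X⁻¹ * Y⁻¹ = Z ^ q) : X * Y = Y * X * Z ^ (q : ℤ) := by
  have hc : Z ^ q * (Y * X) = Y * X * Z ^ q :=
    (((hYZ.mul_left hXZ).pow_right q).symm).eq
  calc X * Y = (X * Y * X⁻¹ * Y⁻¹) * (Y * X) := by group
    _ = Z ^ q * (Y * X) := by rw [h]
    _ = Y * X * Z ^ q := hc
    _ = Y * X * Z ^ (q : ℤ) := by rw [zpow_natCast]

end CommutatorHelpers

namespace HeisCoh

variable (q : ℕ)

/-- The extension of `Heis q` by `ℤ` determined by a 2-cochain `f`. -/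
@[ext]
structure ExtT (q : ℕ) (f : C2 q) where
  w : ℤ
  g : Heis q

variable (f : C2 q)

/-- the group structure on the extension, given a normalized cocycle -/
def extGroup (hco : IsCo q f) (h1 : f (1, 1) = 0) : Group (ExtT q f) where
  mul p p' := ⟨p.w + p'.w + f (p.g, p'.g), p.g * p'.g⟩
  one := ⟨0, 1⟩
  inv p := ⟨-p.w - f (p.g, p.g⁻¹), p.g⁻¹⟩
  mul_assoc p p' p'' := by
    ext : 1
    · show p.w + p'.w + f (p.g, p'.g) + p''.w + f (p.g * p'.g, p''.g) =
        p.w + (p'.w + p''.w + f (p'.g, p''.g)) + f (p.g, p'.g * p''.g)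
      have := hco p.g p'.g p''.g
      linarith
    · exact mul_assoc _ _ _
  one_mul p := by
    ext : 1
    · show 0 + p.w + f (1, p.g) = p.w
      rw [hco.one_fst h1]; ring
    · exact one_mul _
  mul_one p := by
    ext : 1
    · show p.w + 0 + f (p.g, 1) = p.w
      rw [hco.one_snd h1]; ring
    · exact mul_one _
  inv_mul_cancel p := by
    ext : 1
    · show -p.w - f (p.g, p.g⁻¹) + p.w + f (p.g⁻¹, p.g) = 0
      rw [hco.inv_symm h1]; ring
    · exact inv_mul_cancel _

variable {q f}

lemma exists_d1 (hco : IsCo q f) (h1 : f (1, 1) = 0) (hm : mm q f = 0)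
    (hn : nn q f = 0) (hu : uu q f = 0) : ∃ φ : C1 q, f = d1 q φ := by
  letI : Group (ExtT q f) := extGroup q f hco h1
  have hmul : ∀ p p' : ExtT q f,
      p * p' = ⟨p.w + p'.w + f (p.g, p'.g), p.g * p'.g⟩ := fun _ _ => rfl
  have hone : (1 : ExtT q f) = ⟨0, 1⟩ := rfl
  have hinv : ∀ p : ExtT q f, p⁻¹ = ⟨-p.w - f (p.g, p.g⁻¹), p.g⁻¹⟩ := fun _ => rfl
  set XE : ExtT q f := ⟨0, ⟨1,0,0⟩⟩ with hXE
  set YE : ExtT q f := ⟨0, ⟨0,1,0⟩⟩ with hYE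
  set ZE : ExtT q f := ⟨0, ⟨0,0,1⟩⟩ with hZE
  simp only [mm, Heis.one_def] at hm
  simp only [nn, Heis.one_def] at hn
  simp only [uu, Heis.one_def] at hu
  rw [Heis.one_def] at h1
  have hXZ : Commute XE ZE := by
    apply comm_of_commutator
    rw [hone]
    ext : 1
    · show 0 + 0 + f (⟨1,0,0⟩, ⟨0,0,1⟩) + (-0 - f (⟨1,0,0⟩, (⟨1,0,0⟩ : Heis q)⁻¹)) +
        f ((⟨1,0,0⟩ : Heis q) * ⟨0,0,1⟩, (⟨1,0,0⟩ : Heis q)⁻¹) +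
        (-0 - f (⟨0,0,1⟩, (⟨0,0,1⟩ : Heis q)⁻¹)) +
        f ((⟨1,0,0⟩ : Heis q) * ⟨0,0,1⟩ * (⟨1,0,0⟩ : Heis q)⁻¹, (⟨0,0,1⟩ : Heis q)⁻¹) = 0
      simp only [Heis.mk_inv, Heis.mk_mul]
      norm_num
      linarith
    · show (⟨1,0,0⟩ : Heis q) * ⟨0,0,1⟩ * (⟨1,0,0⟩ : Heis q)⁻¹ * (⟨0,0,1⟩ : Heis q)⁻¹ = 1
      rw [Heis.one_def]
      simp only [Heis.mk_inv, Heis.mk_mul]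
      ext <;> simp <;> ring
  have hYZ : Commute YE ZE := by
    apply comm_of_commutator
    rw [hone]
    ext : 1
    · show 0 + 0 + f (⟨0,1,0⟩, ⟨0,0,1⟩) + (-0 - f (⟨0,1,0⟩, (⟨0,1,0⟩ : Heis q)⁻¹)) +
        f ((⟨0,1,0⟩ : Heis q) * ⟨0,0,1⟩, (⟨0,1,0⟩ : Heis q)⁻¹) +
        (-0 - f (⟨0,0,1⟩, (⟨0,0,1⟩ : Heis q)⁻¹)) +
        f ((⟨0,1,0⟩ : Heis q) * ⟨0,0,1⟩ * (⟨0,1,0⟩ : Heis q)⁻¹, (⟨0,0,1⟩ : Heis q)⁻¹) = 0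
      simp only [Heis.mk_inv, Heis.mk_mul]
      norm_num
      linarith
    · show (⟨0,1,0⟩ : Heis q) * ⟨0,0,1⟩ * (⟨0,1,0⟩ : Heis q)⁻¹ * (⟨0,0,1⟩ : Heis q)⁻¹ = 1
      rw [Heis.one_def]
      simp only [Heis.mk_inv, Heis.mk_mul]
      ext <;> simp <;> ring
  have hZpow : ∀ k : ℕ, ZE ^ k =
      ⟨∑ i ∈ Finset.range k, f (⟨0,0,(i:ℤ)⟩, ⟨0,0,1⟩), ⟨0,0,(k:ℤ)⟩⟩ := by
    intro k
    induction k with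
    | zero => rw [pow_zero, hone]; ext : 1 <;> simp [Heis.one_def]
    | succ n ih =>
      rw [pow_succ, ih, hmul]
      ext : 1
      · show (∑ i ∈ Finset.range n, f (⟨0,0,(i:ℤ)⟩, ⟨0,0,1⟩)) + 0 + f (⟨0,0,(n:ℤ)⟩, ⟨0,0,1⟩) = _
        rw [Finset.sum_range_succ]
        ring
      · show ((⟨0,0,(n:ℤ)⟩ : Heis q) * ⟨0,0,1⟩) = ⟨0,0,((n+1 : ℕ):ℤ)⟩
        rw [Heis.mk_mul]
        ext <;> push_cast <;> simp
  have hXY : XE * YE = YE * XE * ZE ^ (q : ℤ) := by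
    apply rel_of_commutator q hXZ hYZ
    rw [hZpow q]
    ext : 1
    · show 0 + 0 + f (⟨1,0,0⟩, ⟨0,1,0⟩) + (-0 - f (⟨1,0,0⟩, (⟨1,0,0⟩ : Heis q)⁻¹)) +
        f ((⟨1,0,0⟩ : Heis q) * ⟨0,1,0⟩, (⟨1,0,0⟩ : Heis q)⁻¹) +
        (-0 - f (⟨0,1,0⟩, (⟨0,1,0⟩ : Heis q)⁻¹)) +
        f ((⟨1,0,0⟩ : Heis q) * ⟨0,1,0⟩ * (⟨1,0,0⟩ : Heis q)⁻¹, (⟨0,1,0⟩ : Heis q)⁻¹) =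
        ∑ i ∈ Finset.range q, f (⟨0,0,(i:ℤ)⟩, ⟨0,0,1⟩)
      simp only [Heis.mk_inv, Heis.mk_mul]
      norm_num
      linarith
    · show (⟨1,0,0⟩ : Heis q) * ⟨0,1,0⟩ * (⟨1,0,0⟩ : Heis q)⁻¹ * (⟨0,1,0⟩ : Heis q)⁻¹ =
        (⟨0,0,(q:ℤ)⟩ : Heis q)
      simp only [Heis.mk_inv, Heis.mk_mul]
      ext <;> simp <;> ring
  let πE : ExtT q f →* Heis q := MonoidHom.mk' ExtT.g (fun _ _ => rfl)
  have hNg : ∀ g : Heis q, (YE ^ g.b * XE ^ g.a * ZE ^ g.c).g = g := by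
    intro g
    have h2 : (YE ^ g.b * XE ^ g.a * ZE ^ g.c).g = πE (YE ^ g.b * XE ^ g.a * ZE ^ g.c) := rfl
    rw [h2, map_mul, map_mul, map_zpow, map_zpow, map_zpow]
    have e1 : πE YE = (⟨0,1,0⟩ : Heis q) := rfl
    have e2 : πE XE = (⟨1,0,0⟩ : Heis q) := rfl
    have e3 : πE ZE = (⟨0,0,1⟩ : Heis q) := rfl
    rw [e1, e2, e3]
    rw [show (⟨0,1,0⟩ : Heis q) = Heis.Y from rfl, show (⟨1,0,0⟩ : Heis q) = Heis.X from rfl,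
      show (⟨0,0,1⟩ : Heis q) = Heis.Z from rfl, Heis.x_zpow, Heis.y_zpow, Heis.z_zpow]
    ext <;> simp
  set ν : C1 q := fun g => (YE ^ g.b * XE ^ g.a * ZE ^ g.c).w with hνdef
  have hν : ∀ g h : Heis q, ν g + ν h + f (g, h) = ν (g * h) := by
    intro g h
    have hN : (YE ^ g.b * XE ^ g.a * ZE ^ g.c) * (YE ^ h.b * XE ^ h.a * ZE ^ h.c) =
        YE ^ (g * h).b * XE ^ (g * h).a * ZE ^ (g * h).c := by
      rw [heis_nf q hXZ hYZ hXY]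
      rw [Heis.mul_a, Heis.mul_b, Heis.mul_c]
    have h2 := congrArg ExtT.w hN
    rw [hmul] at h2
    simp only [hNg] at h2
    exact h2
  refine ⟨fun g => -ν g, ?_⟩
  funext p
  obtain ⟨g, h⟩ := p
  show f (g, h) = -ν h - -ν (g * h) + -ν g
  have := hν g h
  linarith

end HeisCoh

section TrivialRepBridge

open groupCohomology

variable {G : Type} [Group G]

/-- the 2-cocycles, as a submodule -/
abbrev twoCocycles (A : Rep ℤ G) := cocycles₂ A

/-- the 2-coboundaries, as a submodule of the 2-cocycles -/
def twoCoboundaries (A : Rep ℤ G) : Submodule ℤ (cocycles₂ A) :=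
  AddSubgroup.toIntSubmodule
    ((coboundaries₂ A).toAddSubgroup.comap (cocycles₂ A).subtype.toAddMonoidHom)

/-- the concrete `H²` as a quotient -/
abbrev H2Q (A : Rep ℤ G) := cocycles₂ A ⧸ twoCoboundaries A

/-- the quotient map to group cohomology is surjective -/
noncomputable def h2QSurj (A : Rep ℤ G) :=
  QuotientAddGroup.quotientKerEquivOfSurjective (H2π A).hom.toAddMonoidHom
      (fun y => H2_induction_on y (fun x => ⟨x, rfl⟩))

lemma h2QKer (A : Rep ℤ G) :
    (twoCoboundaries A).toAddSubgroup = (H2π A).hom.toAddMonoidHom.ker := by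
  ext x
  exact (H2π_eq_zero_iff x).symm

/-- change of the subgroup -/
noncomputable def h2QEq (A : Rep ℤ G) := QuotientAddGroup.quotientAddEquivOfEq (h2QKer A)

/-- the concrete `H²` agrees with group cohomology -/
noncomputable def h2QEquiv (A : Rep ℤ G) : H2Q A ≃+ groupCohomology A 2 :=
  (h2QEq A).trans (h2QSurj A)

lemma mem_tc_iff (f : G × G → ℤ) :
    f ∈ twoCocycles (Rep.trivial ℤ G ℤ) ↔
      ∀ g h j : G, f (g * h, j) + f (g, h) = f (h, j) + f (g, h * j) := by
  rw [groupCohomology.mem_cocycles₂_iff]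
  constructor <;> intro H g h j <;> have h2 := H g h j <;>
    simp only [Rep.trivial_ρ_apply] at h2 ⊢ <;> exact h2

lemma mem_cb_iff (f : twoCocycles (Rep.trivial ℤ G ℤ)) :
    f ∈ twoCoboundaries (Rep.trivial ℤ G ℤ) ↔
      ∃ φ : G → ℤ, ∀ g h : G, φ h - φ (g * h) + φ g = (f : G × G → ℤ) (g, h) := by
  show (f : G × G → ℤ) ∈ coboundaries₂ _ ↔ _
  constructor
  · rintro ⟨φ, hφ⟩
    refine ⟨φ, fun g h => ?_⟩
    have h2 := congrFun hφ (g, h)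
    simp only [d₁₂_hom_apply, Rep.trivial_ρ_apply] at h2
    exact h2
  · rintro ⟨φ, hφ⟩
    refine ⟨φ, funext fun p => ?_⟩
    simp only [d₁₂_hom_apply, Rep.trivial_ρ_apply]
    exact hφ p.1 p.2

variable {H : Type} [Group H]

/-- transport of 2-cocycles along a group isomorphism (trivial coefficients) -/
noncomputable def tcMap (e : G ≃* H) :
    twoCocycles (Rep.trivial ℤ H ℤ) →ₗ[ℤ] twoCocycles (Rep.trivial ℤ G ℤ) :=
  LinearMap.codRestrict _
    ((LinearMap.funLeft ℤ ℤ (Prod.map e e)).comp (Submodule.subtype _))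
    (fun f => by
      rw [mem_tc_iff]
      intro g h j
      have hf := (mem_tc_iff (f : H × H → ℤ)).1 f.2 (e g) (e h) (e j)
      simp only [← map_mul] at hf
      exact hf)

lemma tcMap_apply (e : G ≃* H) (f : twoCocycles (Rep.trivial ℤ H ℤ)) (p : G × G) :
    ((tcMap e f : twoCocycles (Rep.trivial ℤ G ℤ)) : G × G → ℤ) p
      = (f : H × H → ℤ) (e p.1, e p.2) := rfl

/-- transport of `H²` along a group isomorphism (trivial coefficients) -/
noncomputable def h2Map (e : G ≃* H) :
    H2Q (Rep.trivial ℤ H ℤ) →ₗ[ℤ] H2Q (Rep.trivial ℤ G ℤ) :=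
  Submodule.mapQ _ _ (tcMap e) (by
    intro f hf
    rw [Submodule.mem_comap]
    rw [mem_cb_iff] at hf ⊢
    obtain ⟨φ, hφ⟩ := hf
    refine ⟨fun g => φ (e g), fun g h => ?_⟩
    rw [tcMap_apply]
    simpa [map_mul] using hφ (e g) (e h))

lemma h2Map_comp (e : G ≃* H) :
    (h2Map e).comp (h2Map e.symm) = LinearMap.id := by
  apply Submodule.linearMap_qext
  refine LinearMap.ext fun x => ?_
  simp only [LinearMap.comp_apply, Submodule.mkQ_apply, LinearMap.id_apply]
  rw [h2Map, h2Map, Submodule.mapQ_apply, Submodule.mapQ_apply]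
  congr 1
  ext p
  rw [tcMap_apply, tcMap_apply]
  simp

/-- transport of `H²` along a group isomorphism, as an equivalence -/
noncomputable def h2Equiv (e : G ≃* H) :
    H2Q (Rep.trivial ℤ G ℤ) ≃ₗ[ℤ] H2Q (Rep.trivial ℤ H ℤ) :=
  LinearEquiv.ofLinear (h2Map e.symm) (h2Map e)
    (by simpa using h2Map_comp e.symm) (h2Map_comp e)

end TrivialRepBridge

namespace HeisCoh

open groupCohomology

variable (q : ℕ)

/-- the underlying raw 2-cochain of a 2-cocycle -/
def val2 (f : twoCocycles (Rep.trivial ℤ (Heis q) ℤ)) : C2 q := ⇑f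

lemma isCo_sub {f g : C2 q} (hf : IsCo q f) (hg : IsCo q g) : IsCo q (f - g) := by
  intro a b c
  have h1 := hf a b c
  have h2 := hg a b c
  simp only [Pi.sub_apply]
  linarith

lemma mm_sub (f g : C2 q) : mm q (f - g) = mm q f - mm q g := by
  simp only [mm, Pi.sub_apply]; ring

lemma nn_sub (f g : C2 q) : nn q (f - g) = nn q f - nn q g := by
  simp only [nn, Pi.sub_apply]; ring

lemma uu_sub (f g : C2 q) : uu q (f - g) = uu q f - uu q g := by
  simp only [uu, Pi.sub_apply, Finset.sum_sub_distrib]; ring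

lemma d1_add (φ ψ : C1 q) : d1 q (φ + ψ) = d1 q φ + d1 q ψ := by
  funext p
  simp only [d1, Pi.add_apply]
  ring

/-- the classifying linear map on 2-cocycles -/
noncomputable def Phi : twoCocycles (Rep.trivial ℤ (Heis q) ℤ) →ₗ[ℤ] ℤ × ℤ × ZMod q where
  toFun f := (mm q f, nn q f, ((uu q (f : C2 q) : ℤ) : ZMod q))
  map_add' f g := by
    dsimp only
    have h : (⇑(f + g) : C2 q) = (⇑f : C2 q) + (⇑g : C2 q) := rfl
    rw [h, mm_add, nn_add, uu_add, Prod.mk_add_mk, Prod.mk_add_mk,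
      Prod.mk.injEq, Prod.mk.injEq]
    refine ⟨rfl, rfl, ?_⟩
    push_cast
    ring
  map_smul' r f := by
    dsimp only
    have h : (⇑(r • f) : C2 q) = r • (⇑f : C2 q) := rfl
    rw [h, mm_smul, nn_smul, uu_smul, RingHom.id_apply, Prod.smul_mk, Prod.smul_mk,
      Prod.mk.injEq, Prod.mk.injEq]
    refine ⟨by rw [smul_eq_mul], by rw [smul_eq_mul], ?_⟩
    push_cast
    rw [zsmul_eq_mul]

lemma hker : twoCoboundaries (Rep.trivial ℤ (Heis q) ℤ) ≤ LinearMap.ker (Phi q) := by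
  intro f hf
  obtain ⟨φ, hφ⟩ := (mem_cb_iff f).1 hf
  have hfd : (f : C2 q) = d1 q φ := by
    funext p
    exact (hφ p.1 p.2).symm
  rw [LinearMap.mem_ker]
  show (mm q (⇑f : C2 q), nn q (⇑f : C2 q), ((uu q (⇑f : C2 q) : ℤ) : ZMod q)) = 0
  rw [hfd, mm_d1, nn_d1, uu_d1, Prod.mk_eq_zero, Prod.mk_eq_zero]
  refine ⟨rfl, rfl, ?_⟩
  push_cast
  rw [ZMod.natCast_self]
  ring

/-- the induced map on `H²` -/
noncomputable def PhiBar : H2Q (Rep.trivial ℤ (Heis q) ℤ) →ₗ[ℤ] ℤ × ℤ × ZMod q :=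
  Submodule.liftQ _ (Phi q) (hker q)

lemma phiBar_inj : Function.Injective (PhiBar q) := by
  rw [← LinearMap.ker_eq_bot]
  apply Submodule.ker_liftQ_eq_bot
  intro f hf
  rw [LinearMap.mem_ker] at hf
  have hm : mm q (val2 q f) = 0 := congrArg Prod.fst hf
  have hn : nn q (val2 q f) = 0 := congrArg (fun t => t.2.1) hf
  have hz : ((uu q (val2 q f) : ℤ) : ZMod q) = 0 := congrArg (fun t => t.2.2) hf
  obtain ⟨k, hk⟩ := (ZMod.intCast_zmod_eq_zero_iff_dvd _ q).1 hz
  have hco : IsCo q (val2 q f) := (mem_tc_iff _).1 f.2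
  set κ : ℤ := (val2 q f) (1, 1) with hκ
  set ψ : C1 q := fun g => κ + (-k - κ) * g.c with hψ
  set f' : C2 q := val2 q f - d1 q ψ with hf'
  have hco' : IsCo q f' := isCo_sub q hco (isCo_d1 q ψ)
  have hψ1 : ψ 1 = κ := by rw [hψ]; show κ + (-k - κ) * (0 : ℤ) = κ; ring
  have hψz : ψ ⟨0,0,1⟩ = -k := by rw [hψ]; show κ + (-k - κ) * (1 : ℤ) = -k; ring
  have h1' : f' (1, 1) = 0 := by
    rw [hf']
    simp only [Pi.sub_apply, d1, one_mul, hψ1]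
    rw [← hκ]
    ring
  have hm' : mm q f' = 0 := by rw [hf', mm_sub, mm_d1, hm]; ring
  have hn' : nn q f' = 0 := by rw [hf', nn_sub, nn_d1, hn]; ring
  have hu' : uu q f' = 0 := by rw [hf', uu_sub, uu_d1, hψz, hk]; ring
  obtain ⟨φ, hφeq⟩ := exists_d1 hco' h1' hm' hn' hu'
  have hsum : val2 q f = d1 q (ψ + φ) := by
    rw [d1_add, ← hφeq, hf']
    funext p
    simp only [Pi.add_apply, Pi.sub_apply]
    ring
  apply (mem_cb_iff f).2
  refine ⟨ψ + φ, fun g h => ?_⟩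
  have h3 : val2 q f (g, h) = d1 q (ψ + φ) (g, h) := congrFun hsum (g, h)
  have h4 : d1 q (ψ + φ) (g, h) = (ψ + φ) h - (ψ + φ) (g * h) + (ψ + φ) g := rfl
  rw [h4] at h3
  exact h3.symm

/-- the explicit cocycles as elements of `Z²` -/
noncomputable def G1 : twoCocycles (Rep.trivial ℤ (Heis q) ℤ) :=
  ⟨gam1 q, (mem_tc_iff _).2 (isCo_gam1 q)⟩
noncomputable def G2 : twoCocycles (Rep.trivial ℤ (Heis q) ℤ) :=
  ⟨gam2 q, (mem_tc_iff _).2 (isCo_gam2 q)⟩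
noncomputable def Al : twoCocycles (Rep.trivial ℤ (Heis q) ℤ) :=
  ⟨alpha q, (mem_tc_iff _).2 (isCo_alpha q)⟩

lemma phiBar_surj : Function.Surjective (PhiBar q) := by
  rintro ⟨p, r, t⟩
  obtain ⟨t', rfl⟩ := ZMod.intCast_surjective t
  refine ⟨Submodule.Quotient.mk (p • G1 q + (-r) • G2 q + t' • Al q), ?_⟩
  rw [PhiBar, Submodule.liftQ_apply]
  have hval : (⇑(p • G1 q + (-r) • G2 q + t' • Al q) : C2 q)
      = p • gam1 q + (-r) • gam2 q + t' • alpha q := rfl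
  show (mm q (⇑(p • G1 q + (-r) • G2 q + t' • Al q) : C2 q), nn q _,
    ((uu q _ : ℤ) : ZMod q)) = (p, r, (t' : ZMod q))
  rw [hval]
  rw [mm_add, mm_add, nn_add, nn_add, uu_add, uu_add,
    mm_smul, mm_smul, mm_smul, nn_smul, nn_smul, nn_smul, uu_smul, uu_smul, uu_smul,
    mm_gam1, mm_gam2, mm_alpha, nn_gam1, nn_gam2, nn_alpha, uu_gam1, uu_gam2, uu_alpha]
  rw [Prod.mk.injEq]
  refine ⟨by ring, ?_⟩
  rw [Prod.mk.injEq]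
  refine ⟨by ring, ?_⟩
  push_cast
  rw [ZMod.natCast_self]
  ring

/-- the computation of `H²` of the Heisenberg-type group -/
noncomputable def h2HeisEquiv : H2Q (Rep.trivial ℤ (Heis q) ℤ) ≃ₗ[ℤ] ℤ × ℤ × ZMod q :=
  LinearEquiv.ofBijective (PhiBar q) ⟨phiBar_inj q, phiBar_surj q⟩

end HeisCoh

/-- bridge between abstract degree-2 group cohomology and the concrete `H2` -/
noncomputable def cohomAdd (q : ℕ) :
    (groupCohomology (Rep.trivial ℤ (PresentedGroup (nilRels q)) ℤ) 2) ≃+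
      H2Q (Rep.trivial ℤ (PresentedGroup (nilRels q)) ℤ) :=
  (h2QEquiv (Rep.trivial ℤ (PresentedGroup (nilRels q)) ℤ)).symm

/-- For `q ≥ 1` and `Γ_q = ⟨x, y, z ∣ [x,y] = z^q, xz = zx, yz = zy⟩`, the second group
cohomology `H²(Γ_q; ℤ)` with trivial coefficients `ℤ` is isomorphic as an abelian group
to `ℤ ⊕ ℤ ⊕ ℤ/qℤ`. -/
theorem stmt15 (q : ℕ) (hq : 1 ≤ q) :
    Nonempty ((groupCohomology (Rep.trivial ℤ (PresentedGroup (nilRels q)) ℤ) 2) ≃+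
      (ℤ × ℤ × ZMod q)) := by
  exact ⟨((cohomAdd q).trans
    ((h2Equiv (HeisIso.presIso q)).toAddEquiv.trans (HeisCoh.h2HeisEquiv q).toAddEquiv))⟩
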